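/- The finite simple graph G on six vertices {c, l_1, l_2, l_3, u, v}, whose edges are exactly c l_1, c l_2, c l_3 (a star K_{1,3} with center c), together with all edges from u to each of c, l_1, l_2, l_3 and all edges from v to each of c, l_1, l_2, l_3 (and with u,v non-adjacent and l_1,l_2,l_3 pairwise non-adjacent), is not a central-max-point tolerance graph (CMPTG). -/

import Mathlib

variable {V : Type*}

/-- An MPT representation of a simple graph: each vertex `u` gets an interval
`[a u, b u]` with a point `p u` inside it, and distinct vertices `u, v` are adjacent
iff both `p u` and `p v` lie in the intersection of the two intervals. -/
def IsMPTRep (G : SimpleGraph V) (a b p : V → ℝ) : Prop :=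
  (∀ u, a u ≤ b u) ∧ (∀ u, p u ∈ Set.Icc (a u) (b u)) ∧
    ∀ u v : V, u ≠ v →
      (G.Adj u v ↔ p u ∈ Set.Icc (a u) (b u) ∩ Set.Icc (a v) (b v) ∧
                   p v ∈ Set.Icc (a u) (b u) ∩ Set.Icc (a v) (b v))

/-- A central-max-point tolerance graph: an MPT representation where every point is
the center of its interval. -/
def IsCMPTG (G : SimpleGraph V) : Prop :=
  ∃ a b : V → ℝ, IsMPTRep G a b (fun u => (a u + b u) / 2)

/-- The graph on six vertices `0 = c`, `1 = l₁`, `2 = l₂`, `3 = l₃`, `4 = u`, `5 = v`: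
a star `K_{1,3}` with center `c` and leaves `l₁, l₂, l₃`, together with two
non-adjacent vertices `u, v` each adjacent to all of `c, l₁, l₂, l₃`. -/
def starPlusTwo : SimpleGraph (Fin 6) where
  Adj i j := i ≠ j ∧ ¬((i = 1 ∨ i = 2 ∨ i = 3) ∧ (j = 1 ∨ j = 2 ∨ j = 3)) ∧
    ¬((i = 4 ∨ i = 5) ∧ (j = 4 ∨ j = 5))
  symm := ⟨by
    rintro i j ⟨h1, h2, h3⟩
    exact ⟨h1.symm, fun h => h2 ⟨h.2, h.1⟩, fun h => h3 ⟨h.2, h.1⟩⟩⟩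
  loopless := ⟨fun i h => h.1 rfl⟩

private lemma orsw {A B C D : Prop} (h : A ∨ B ∨ C ∨ D) : C ∨ D ∨ A ∨ B := by tauto

/-- Core contradiction, with the three leaf intervals sorted by center. -/
private lemma keyCore (au bu a1 b1 a2 b2 a3 b3 pv : ℝ)
    (h1 : a1 ≤ b1) (h2 : a2 ≤ b2) (h3 : a3 ≤ b3)
    (hgap : bu < pv)
    (hL1 : 2*au ≤ a1+b1) (hL2 : 2*au ≤ a2+b2) (hL3 : 2*au ≤ a3+b3)
    (hU1 : a1+b1 ≤ 2*bu) (hU2 : a2+b2 ≤ 2*bu) (hU3 : a3+b3 ≤ 2*bu)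
    (hv1 : pv ≤ b1) (hv2 : pv ≤ b2) (hv3 : pv ≤ b3)
    (ha1 : 2*a1 ≤ au+bu) (ha2 : 2*a2 ≤ au+bu) (ha3 : 2*a3 ≤ au+bu)
    (h12 : a1+b1 ≤ a2+b2) (h23 : a2+b2 ≤ a3+b3)
    (hn12 : a2+b2 < 2*a1 ∨ 2*b1 < a2+b2 ∨ a1+b1 < 2*a2 ∨ 2*b2 < a1+b1)
    (hn13 : a3+b3 < 2*a1 ∨ 2*b1 < a3+b3 ∨ a1+b1 < 2*a3 ∨ 2*b3 < a1+b1)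
    (hn23 : a3+b3 < 2*a2 ∨ 2*b2 < a3+b3 ∨ a2+b2 < 2*a3 ∨ 2*b3 < a2+b2) :
    False := by
  rcases hn23 with h | h | h | h <;> rcases hn12 with h' | h' | h' | h' <;> linarith

/-- Core contradiction, leaf intervals unsorted. -/
private lemma key3 (au bu a1 b1 a2 b2 a3 b3 pv : ℝ)
    (h1 : a1 ≤ b1) (h2 : a2 ≤ b2) (h3 : a3 ≤ b3)
    (hgap : bu < pv)
    (hL1 : 2*au ≤ a1+b1) (hL2 : 2*au ≤ a2+b2) (hL3 : 2*au ≤ a3+b3)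
    (hU1 : a1+b1 ≤ 2*bu) (hU2 : a2+b2 ≤ 2*bu) (hU3 : a3+b3 ≤ 2*bu)
    (hv1 : pv ≤ b1) (hv2 : pv ≤ b2) (hv3 : pv ≤ b3)
    (ha1 : 2*a1 ≤ au+bu) (ha2 : 2*a2 ≤ au+bu) (ha3 : 2*a3 ≤ au+bu)
    (hn12 : a2+b2 < 2*a1 ∨ 2*b1 < a2+b2 ∨ a1+b1 < 2*a2 ∨ 2*b2 < a1+b1)
    (hn13 : a3+b3 < 2*a1 ∨ 2*b1 < a3+b3 ∨ a1+b1 < 2*a3 ∨ 2*b3 < a1+b1)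
    (hn23 : a3+b3 < 2*a2 ∨ 2*b2 < a3+b3 ∨ a2+b2 < 2*a3 ∨ 2*b3 < a2+b2) :
    False := by
  rcases le_total (a1+b1) (a2+b2) with h12 | h12 <;>
  rcases le_total (a2+b2) (a3+b3) with h23 | h23 <;>
  rcases le_total (a1+b1) (a3+b3) with h13 | h13
  · exact keyCore au bu a1 b1 a2 b2 a3 b3 pv h1 h2 h3 hgap hL1 hL2 hL3 hU1 hU2 hU3
      hv1 hv2 hv3 ha1 ha2 ha3 h12 h23 hn12 hn13 hn23
  · exact keyCore au bu a1 b1 a2 b2 a3 b3 pv h1 h2 h3 hgap hL1 hL2 hL3 hU1 hU2 hU3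
      hv1 hv2 hv3 ha1 ha2 ha3 h12 h23 hn12 hn13 hn23
  · exact keyCore au bu a1 b1 a3 b3 a2 b2 pv h1 h3 h2 hgap hL1 hL3 hL2 hU1 hU3 hU2
      hv1 hv3 hv2 ha1 ha3 ha2 h13 h23 hn13 hn12 (orsw hn23)
  · exact keyCore au bu a3 b3 a1 b1 a2 b2 pv h3 h1 h2 hgap hL3 hL1 hL2 hU3 hU1 hU2
      hv3 hv1 hv2 ha3 ha1 ha2 h13 h12 (orsw hn13) (orsw hn23) hn12
  · exact keyCore au bu a2 b2 a1 b1 a3 b3 pv h2 h1 h3 hgap hL2 hL1 hL3 hU2 hU1 hU3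
      hv2 hv1 hv3 ha2 ha1 ha3 h12 h13 (orsw hn12) hn23 hn13
  · exact keyCore au bu a2 b2 a3 b3 a1 b1 pv h2 h3 h1 hgap hL2 hL3 hL1 hU2 hU3 hU1
      hv2 hv3 hv1 ha2 ha3 ha1 h23 h13 hn23 (orsw hn12) (orsw hn13)
  · exact keyCore au bu a3 b3 a2 b2 a1 b1 pv h3 h2 h1 hgap hL3 hL2 hL1 hU3 hU2 hU1
      hv3 hv2 hv1 ha3 ha2 ha1 h23 h12 (orsw hn23) (orsw hn13) (orsw hn12)
  · exact keyCore au bu a3 b3 a2 b2 a1 b1 pv h3 h2 h1 hgap hL3 hL2 hL1 hU3 hU2 hU1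
      hv3 hv2 hv1 ha3 ha2 ha1 h23 h12 (orsw hn23) (orsw hn13) (orsw hn12)

/-- Mirrored version of `key3` (probe point to the left). -/
private lemma key3R (au bu a1 b1 a2 b2 a3 b3 pv : ℝ)
    (h1 : a1 ≤ b1) (h2 : a2 ≤ b2) (h3 : a3 ≤ b3)
    (hgap : pv < au)
    (hL1 : 2*au ≤ a1+b1) (hL2 : 2*au ≤ a2+b2) (hL3 : 2*au ≤ a3+b3)
    (hU1 : a1+b1 ≤ 2*bu) (hU2 : a2+b2 ≤ 2*bu) (hU3 : a3+b3 ≤ 2*bu)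
    (hv1 : a1 ≤ pv) (hv2 : a2 ≤ pv) (hv3 : a3 ≤ pv)
    (ha1 : au+bu ≤ 2*b1) (ha2 : au+bu ≤ 2*b2) (ha3 : au+bu ≤ 2*b3)
    (hn12 : a2+b2 < 2*a1 ∨ 2*b1 < a2+b2 ∨ a1+b1 < 2*a2 ∨ 2*b2 < a1+b1)
    (hn13 : a3+b3 < 2*a1 ∨ 2*b1 < a3+b3 ∨ a1+b1 < 2*a3 ∨ 2*b3 < a1+b1)
    (hn23 : a3+b3 < 2*a2 ∨ 2*b2 < a3+b3 ∨ a2+b2 < 2*a3 ∨ 2*b3 < a2+b2) :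
    False := by
  have c12 : (-b2)+(-a2) < 2*(-b1) ∨ 2*(-a1) < (-b2)+(-a2) ∨
      (-b1)+(-a1) < 2*(-b2) ∨ 2*(-a2) < (-b1)+(-a1) := by
    rcases hn12 with h | h | h | h
    · exact Or.inr (Or.inl (by linarith))
    · exact Or.inl (by linarith)
    · exact Or.inr (Or.inr (Or.inr (by linarith)))
    · exact Or.inr (Or.inr (Or.inl (by linarith)))
  have c13 : (-b3)+(-a3) < 2*(-b1) ∨ 2*(-a1) < (-b3)+(-a3) ∨
      (-b1)+(-a1) < 2*(-b3) ∨ 2*(-a3) < (-b1)+(-a1) := by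
    rcases hn13 with h | h | h | h
    · exact Or.inr (Or.inl (by linarith))
    · exact Or.inl (by linarith)
    · exact Or.inr (Or.inr (Or.inr (by linarith)))
    · exact Or.inr (Or.inr (Or.inl (by linarith)))
  have c23 : (-b3)+(-a3) < 2*(-b2) ∨ 2*(-a2) < (-b3)+(-a3) ∨
      (-b2)+(-a2) < 2*(-b3) ∨ 2*(-a3) < (-b2)+(-a2) := by
    rcases hn23 with h | h | h | h
    · exact Or.inr (Or.inl (by linarith))
    · exact Or.inl (by linarith)
    · exact Or.inr (Or.inr (Or.inr (by linarith)))
    · exact Or.inr (Or.inr (Or.inl (by linarith)))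
  exact key3 (-bu) (-au) (-b1) (-a1) (-b2) (-a2) (-b3) (-a3) (-pv)
    (by linarith) (by linarith) (by linarith) (by linarith)
    (by linarith) (by linarith) (by linarith)
    (by linarith) (by linarith) (by linarith)
    (by linarith) (by linarith) (by linarith)
    (by linarith) (by linarith) (by linarith)
    c12 c13 c23

/-- Main combinatorial lemma: intervals for u, v, l₁, l₂, l₃ with the K₂,₃
adjacencies (centers) cannot exist. -/
private lemma keyMain (au bu av bv a1 b1 a2 b2 a3 b3 : ℝ)
    (h1 : a1 ≤ b1) (h2 : a2 ≤ b2) (h3 : a3 ≤ b3)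
    (hu1 : 2*au ≤ a1+b1 ∧ a1+b1 ≤ 2*bu ∧ 2*a1 ≤ au+bu ∧ au+bu ≤ 2*b1)
    (hu2 : 2*au ≤ a2+b2 ∧ a2+b2 ≤ 2*bu ∧ 2*a2 ≤ au+bu ∧ au+bu ≤ 2*b2)
    (hu3 : 2*au ≤ a3+b3 ∧ a3+b3 ≤ 2*bu ∧ 2*a3 ≤ au+bu ∧ au+bu ≤ 2*b3)
    (hv1 : 2*av ≤ a1+b1 ∧ a1+b1 ≤ 2*bv ∧ 2*a1 ≤ av+bv ∧ av+bv ≤ 2*b1)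
    (hv2 : 2*av ≤ a2+b2 ∧ a2+b2 ≤ 2*bv ∧ 2*a2 ≤ av+bv ∧ av+bv ≤ 2*b2)
    (hv3 : 2*av ≤ a3+b3 ∧ a3+b3 ≤ 2*bv ∧ 2*a3 ≤ av+bv ∧ av+bv ≤ 2*b3)
    (huv : au+bu < 2*av ∨ 2*bv < au+bu ∨ av+bv < 2*au ∨ 2*bu < av+bv)
    (hn12 : a2+b2 < 2*a1 ∨ 2*b1 < a2+b2 ∨ a1+b1 < 2*a2 ∨ 2*b2 < a1+b1)
    (hn13 : a3+b3 < 2*a1 ∨ 2*b1 < a3+b3 ∨ a1+b1 < 2*a3 ∨ 2*b3 < a1+b1)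
    (hn23 : a3+b3 < 2*a2 ∨ 2*b2 < a3+b3 ∨ a2+b2 < 2*a3 ∨ 2*b3 < a2+b2) :
    False := by
  obtain ⟨u1a, u1b, u1c, u1d⟩ := hu1
  obtain ⟨u2a, u2b, u2c, u2d⟩ := hu2
  obtain ⟨u3a, u3b, u3c, u3d⟩ := hu3
  obtain ⟨v1a, v1b, v1c, v1d⟩ := hv1
  obtain ⟨v2a, v2b, v2c, v2d⟩ := hv2
  obtain ⟨v3a, v3b, v3c, v3d⟩ := hv3
  rcases huv with h | h | h | h
  · -- center of u lies strictly left of av : probe interval v, pv = center of u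
    exact key3R av bv a1 b1 a2 b2 a3 b3 ((au+bu)/2) h1 h2 h3 (by linarith)
      v1a v2a v3a v1b v2b v3b (by linarith) (by linarith) (by linarith)
      v1d v2d v3d hn12 hn13 hn23
  · -- center of u lies strictly right of bv : probe interval v, pv = center of u
    exact key3 av bv a1 b1 a2 b2 a3 b3 ((au+bu)/2) h1 h2 h3 (by linarith)
      v1a v2a v3a v1b v2b v3b (by linarith) (by linarith) (by linarith)
      v1c v2c v3c hn12 hn13 hn23
  · -- center of v lies strictly left of au
    exact key3R au bu a1 b1 a2 b2 a3 b3 ((av+bv)/2) h1 h2 h3 (by linarith)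
      u1a u2a u3a u1b u2b u3b (by linarith) (by linarith) (by linarith)
      u1d u2d u3d hn12 hn13 hn23
  · -- center of v lies strictly right of bu
    exact key3 au bu a1 b1 a2 b2 a3 b3 ((av+bv)/2) h1 h2 h3 (by linarith)
      u1a u2a u3a u1b u2b u3b (by linarith) (by linarith) (by linarith)
      u1c u2c u3c hn12 hn13 hn23

/-- The graph obtained from `K_{1,3}` by adding two non-adjacent vertices adjacent to
every vertex of the star is not a CMPTG. -/
theorem starPlusTwo_not_cmptg : ¬ IsCMPTG starPlusTwo := by
  rintro ⟨a, b, hab, hmem, hadj⟩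
  -- unfolding adjacency of the concrete graph
  have hA : ∀ i j : Fin 6,
      (i ≠ j ∧ ¬((i = 1 ∨ i = 2 ∨ i = 3) ∧ (j = 1 ∨ j = 2 ∨ j = 3)) ∧
        ¬((i = 4 ∨ i = 5) ∧ (j = 4 ∨ j = 5))) → starPlusTwo.Adj i j :=
    fun _ _ h => h
  have hN : ∀ i j : Fin 6, starPlusTwo.Adj i j →
      (i ≠ j ∧ ¬((i = 1 ∨ i = 2 ∨ i = 3) ∧ (j = 1 ∨ j = 2 ∨ j = 3)) ∧
        ¬((i = 4 ∨ i = 5) ∧ (j = 4 ∨ j = 5))) :=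
    fun _ _ h => h
  -- adjacency gives linear inequalities on centers
  have hAdj : ∀ i j : Fin 6, i ≠ j → starPlusTwo.Adj i j →
      (a j ≤ (a i + b i)/2 ∧ (a i + b i)/2 ≤ b j) ∧
      (a i ≤ (a j + b j)/2 ∧ (a j + b j)/2 ≤ b i) := by
    intro i j hij hAij
    have h' := (hadj i j hij).mp hAij
    have hx := ((Set.mem_inter_iff _ _ _).mp h'.1).2
    have hy := ((Set.mem_inter_iff _ _ _).mp h'.2).1
    exact ⟨Set.mem_Icc.mp hx, Set.mem_Icc.mp hy⟩
  -- non-adjacency gives a disjunction of strict inequalities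
  have hNAdj : ∀ i j : Fin 6, i ≠ j → ¬ starPlusTwo.Adj i j →
      a i + b i < 2 * a j ∨ 2 * b j < a i + b i ∨
      a j + b j < 2 * a i ∨ 2 * b i < a j + b j := by
    intro i j hij hnA
    by_contra hc
    push_neg at hc
    obtain ⟨c1, c2, c3, c4⟩ := hc
    refine hnA ((hadj i j hij).mpr ⟨Set.mem_inter (hmem i) ?_, Set.mem_inter ?_ (hmem j)⟩)
    · exact Set.mem_Icc.mpr ⟨by linarith, by linarith⟩
    · exact Set.mem_Icc.mpr ⟨by linarith, by linarith⟩
  -- concrete adjacency / non-adjacency facts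
  have A41 := hAdj 4 1 (by decide) (hA 4 1 (by decide))
  have A42 := hAdj 4 2 (by decide) (hA 4 2 (by decide))
  have A43 := hAdj 4 3 (by decide) (hA 4 3 (by decide))
  have A51 := hAdj 5 1 (by decide) (hA 5 1 (by decide))
  have A52 := hAdj 5 2 (by decide) (hA 5 2 (by decide))
  have A53 := hAdj 5 3 (by decide) (hA 5 3 (by decide))
  have N12 := hNAdj 2 1 (by decide) (fun h' => (hN 2 1 h').2.1 (by decide))
  have N13 := hNAdj 3 1 (by decide) (fun h' => (hN 3 1 h').2.1 (by decide))
  have N23 := hNAdj 3 2 (by decide) (fun h' => (hN 3 2 h').2.1 (by decide))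
  have N45 := hNAdj 4 5 (by decide) (fun h' => (hN 4 5 h').2.2 (by decide))
  obtain ⟨⟨p1, p2⟩, ⟨p3, p4⟩⟩ := A41
  obtain ⟨⟨q1, q2⟩, ⟨q3, q4⟩⟩ := A42
  obtain ⟨⟨r1, r2⟩, ⟨r3, r4⟩⟩ := A43
  obtain ⟨⟨s1, s2⟩, ⟨s3, s4⟩⟩ := A51
  obtain ⟨⟨t1, t2⟩, ⟨t3, t4⟩⟩ := A52
  obtain ⟨⟨w1, w2⟩, ⟨w3, w4⟩⟩ := A53
  exact keyMain (a 4) (b 4) (a 5) (b 5) (a 1) (b 1) (a 2) (b 2) (a 3) (b 3)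
    (hab 1) (hab 2) (hab 3)
    ⟨by linarith, by linarith, by linarith, by linarith⟩
    ⟨by linarith, by linarith, by linarith, by linarith⟩
    ⟨by linarith, by linarith, by linarith, by linarith⟩
    ⟨by linarith, by linarith, by linarith, by linarith⟩
    ⟨by linarith, by linarith, by linarith, by linarith⟩
    ⟨by linarith, by linarith, by linarith, by linarith⟩
    N45 N12 N13 N23
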